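/- Let a = p/q ∈ ℚ with p, q ∈ ℕ relatively prime, and let λ ∈ ℕ. Then the condition (Σ_{j∈ℤ} (p/q)^j λℤ) ∩ ℤ ⊆ λℤ holds if and only if λ is relatively prime to both p and q. (Equivalently, lcm(λ, (pq)^J) ∈ λ(pq)^J ℤ for all J ∈ ℕ iff gcd(λ, pq) = 1.) -/

import Mathlib

/-- for `a = p/q` with `gcd(p,q) = 1` and `λ ∈ ℕ`, the oversampling
condition `(Σ_{j∈ℤ} (p/q)^j λℤ) ∩ ℤ ⊆ λℤ` holds iff `λ` is relatively prime
to both `p` and `q`. -/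
theorem stmt14 (p q lam : ℕ) (hp : 0 < p) (hq : 0 < q) (hpq : Nat.Coprime p q)
    (hlam : 0 < lam) :
    (((AddSubgroup.closure
          {x : ℝ | ∃ j : ℤ, ∃ m : ℤ, x = ((p : ℝ) / (q : ℝ)) ^ j * (lam : ℝ) * (m : ℝ)} :
        AddSubgroup ℝ) : Set ℝ) ∩ {x : ℝ | ∃ k : ℤ, x = (k : ℝ)} ⊆
        {x : ℝ | ∃ m : ℤ, x = (lam : ℝ) * (m : ℝ)}) ↔
      Nat.Coprime lam p ∧ Nat.Coprime lam q := by
  have hp' : (p : ℝ) ≠ 0 := Nat.cast_ne_zero.mpr hp.ne'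
  have hq' : (q : ℝ) ≠ 0 := Nat.cast_ne_zero.mpr hq.ne'
  have hlam' : (lam : ℝ) ≠ 0 := Nat.cast_ne_zero.mpr hlam.ne'
  constructor
  · intro h
    have key : ∀ (j m : ℤ) (k : ℤ), ((p : ℝ) / q) ^ j * lam * m = k →
        ∃ m' : ℤ, ((p : ℝ) / q) ^ j * lam * m = lam * m' := by
      intro j m k hk
      exact h ⟨AddSubgroup.subset_closure ⟨j, m, rfl⟩, ⟨k, hk⟩⟩
    constructor
    · -- Nat.Coprime lam p
      obtain ⟨a, ha⟩ := Nat.gcd_dvd_left lam p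
      obtain ⟨b, hb⟩ := Nat.gcd_dvd_right lam p
      set d := Nat.gcd lam p with hd
      have ha0 : a ≠ 0 := by rintro rfl; simp only [mul_zero] at ha; omega
      have hb0 : b ≠ 0 := by rintro rfl; simp only [mul_zero] at hb; omega
      have hd0 : (d : ℝ) ≠ 0 := Nat.cast_ne_zero.mpr (Nat.gcd_pos_of_pos_right _ hp).ne'
      have hx : ((p : ℝ) / q) ^ (-1 : ℤ) * lam * ((b : ℤ) : ℝ) = ((a * q : ℕ) : ℝ) := by
        have hpr : (p : ℝ) = (d : ℝ) * b := by exact_mod_cast hb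
        have hlr : (lam : ℝ) = (d : ℝ) * a := by exact_mod_cast ha
        rw [zpow_neg_one, hpr, hlr]
        push_cast
        have hb0' : (b : ℝ) ≠ 0 := Nat.cast_ne_zero.mpr hb0
        field_simp
      obtain ⟨m', hm'⟩ := key (-1) b (a * q) (by exact_mod_cast hx)
      rw [hx] at hm'
      have hz : (a * q : ℤ) = lam * m' := by exact_mod_cast hm'
      have hdq : (d : ℤ) ∣ (q : ℤ) := by
        have : (a : ℤ) * q = (d * a : ℕ) * m' := by rw [← ha]; exact_mod_cast hz
        refine ⟨m', ?_⟩
        push_cast at this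
        have : (a : ℤ) * q = a * (d * m') := by linarith [this]
        exact mul_left_cancel₀ (by exact_mod_cast ha0) this
      have : d ∣ q := Int.natCast_dvd_natCast.mp hdq
      have : d ∣ Nat.gcd p q := Nat.dvd_gcd ⟨b, hb⟩ this
      have : d ∣ 1 := hpq ▸ this
      exact Nat.dvd_one.mp this
    · -- Nat.Coprime lam q
      obtain ⟨a, ha⟩ := Nat.gcd_dvd_left lam q
      obtain ⟨b, hb⟩ := Nat.gcd_dvd_right lam q
      set d := Nat.gcd lam q with hd
      have ha0 : a ≠ 0 := by rintro rfl; simp only [mul_zero] at ha; omega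
      have hb0 : b ≠ 0 := by rintro rfl; simp only [mul_zero] at hb; omega
      have hd0 : (d : ℝ) ≠ 0 := Nat.cast_ne_zero.mpr (Nat.gcd_pos_of_pos_right _ hq).ne'
      have hx : ((p : ℝ) / q) ^ (1 : ℤ) * lam * ((b : ℤ) : ℝ) = ((a * p : ℕ) : ℝ) := by
        have hqr : (q : ℝ) = (d : ℝ) * b := by exact_mod_cast hb
        have hlr : (lam : ℝ) = (d : ℝ) * a := by exact_mod_cast ha
        rw [zpow_one, hqr, hlr]
        push_cast
        have hb0' : (b : ℝ) ≠ 0 := Nat.cast_ne_zero.mpr hb0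
        field_simp
      obtain ⟨m', hm'⟩ := key 1 b (a * p) (by exact_mod_cast hx)
      rw [hx] at hm'
      have hz : (a * p : ℤ) = lam * m' := by exact_mod_cast hm'
      have hdp : (d : ℤ) ∣ (p : ℤ) := by
        have : (a : ℤ) * p = (d * a : ℕ) * m' := by rw [← ha]; exact_mod_cast hz
        refine ⟨m', ?_⟩
        push_cast at this
        have : (a : ℤ) * p = a * (d * m') := by linarith [this]
        exact mul_left_cancel₀ (by exact_mod_cast ha0) this
      have : d ∣ p := Int.natCast_dvd_natCast.mp hdp
      have : d ∣ Nat.gcd p q := Nat.dvd_gcd this ⟨b, hb⟩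
      have : d ∣ 1 := hpq ▸ this
      exact Nat.dvd_one.mp this
  · rintro ⟨h1, h2⟩ x ⟨hxS, k, hk⟩
    -- subgroup T
    set T : AddSubgroup ℝ :=
      { carrier := {x : ℝ | ∃ n : ℤ, ∃ J : ℕ, x * ((p * q : ℕ) : ℝ) ^ J = lam * n}
        zero_mem' := ⟨0, 0, by simp⟩
        add_mem' := by
          rintro x y ⟨n1, J1, h1⟩ ⟨n2, J2, h2⟩
          refine ⟨n1 * (p * q : ℕ) ^ J2 + n2 * (p * q : ℕ) ^ J1, J1 + J2, ?_⟩
          rw [pow_add]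
          have e : (x + y) * (((p * q : ℕ) : ℝ) ^ J1 * ((p * q : ℕ) : ℝ) ^ J2) =
              (x * ((p * q : ℕ) : ℝ) ^ J1) * ((p * q : ℕ) : ℝ) ^ J2
              + (y * ((p * q : ℕ) : ℝ) ^ J2) * ((p * q : ℕ) : ℝ) ^ J1 := by ring
          rw [e, h1, h2]
          push_cast
          ring
        neg_mem' := by
          rintro x ⟨n, J, hn⟩
          exact ⟨-n, J, by push_cast; push_cast at hn; linarith⟩ } with hT
    have hsub : (AddSubgroup.closure
        {x : ℝ | ∃ j : ℤ, ∃ m : ℤ, x = ((p : ℝ) / (q : ℝ)) ^ j * (lam : ℝ) * (m : ℝ)}) ≤ T := by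
      rw [AddSubgroup.closure_le]
      rintro x ⟨j, m, rfl⟩
      refine ⟨m * (p : ℤ) ^ ((j.natAbs : ℤ) + j).toNat * (q : ℤ) ^ ((j.natAbs : ℤ) - j).toNat,
        j.natAbs, ?_⟩
      have e1 : ((p : ℝ) / q) ^ j * ((p * q : ℕ) : ℝ) ^ (j.natAbs) =
          (p : ℝ) ^ (((j.natAbs : ℤ) + j).toNat) * (q : ℝ) ^ (((j.natAbs : ℤ) - j).toNat) := by
        have h1 : (0 : ℤ) ≤ (j.natAbs : ℤ) + j := by
          rcases Int.natAbs_eq j with h | h <;> omega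
        have h2 : (0 : ℤ) ≤ (j.natAbs : ℤ) - j := by
          rcases Int.natAbs_eq j with h | h <;> omega
        have : ((p : ℝ) / q) ^ j * ((p * q : ℕ) : ℝ) ^ (j.natAbs) =
            (p : ℝ) ^ ((j.natAbs : ℤ) + j) * (q : ℝ) ^ ((j.natAbs : ℤ) - j) := by
          rw [div_zpow, zpow_add₀ hp', zpow_sub₀ hq']
          push_cast
          rw [mul_pow, ← zpow_natCast (p : ℝ), ← zpow_natCast (q : ℝ)]
          field_simp
          ring
          simp only [Int.natCast_natAbs]
        rw [this, ← zpow_natCast (p : ℝ), ← zpow_natCast (q : ℝ),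
          Int.toNat_of_nonneg h1, Int.toNat_of_nonneg h2]
      calc ((p : ℝ) / q) ^ j * lam * m * ((p * q : ℕ) : ℝ) ^ j.natAbs
          = (((p : ℝ) / q) ^ j * (((p * q : ℕ) : ℝ)) ^ j.natAbs) * (lam * m) := by
            ring
        _ = (lam : ℝ) * ((m * (p : ℤ) ^ ((j.natAbs : ℤ) + j).toNat
              * (q : ℤ) ^ ((j.natAbs : ℤ) - j).toNat : ℤ) : ℝ) := by
            rw [e1]; push_cast; ring
    obtain ⟨n, J, hn⟩ := hsub hxS
    rw [hk] at hn
    have hz : (k : ℤ) * ((p * q : ℕ) : ℤ) ^ J = lam * n := by exact_mod_cast hn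
    have hcop : IsCoprime ((lam : ℤ)) (((p * q : ℕ) : ℤ) ^ J) := by
      have : Nat.Coprime lam ((p * q) ^ J) := (Nat.Coprime.mul_right h1 h2).pow_right J
      exact_mod_cast Nat.isCoprime_iff_coprime.mpr this
    have hdvd : (((p * q : ℕ) : ℤ) ^ J) ∣ n := by
      have : (((p * q : ℕ) : ℤ) ^ J) ∣ lam * n := ⟨k, by linarith [hz]⟩
      exact (hcop.symm.dvd_of_dvd_mul_left this)
    obtain ⟨n', hn'⟩ := hdvd
    refine ⟨n', ?_⟩
    rw [hk]
    have hM0 : ((p * q : ℕ) : ℤ) ^ J ≠ 0 := by positivity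
    have hk' : k = lam * n' := by
      have e : k * ((p * q : ℕ) : ℤ) ^ J = (lam * n') * ((p * q : ℕ) : ℤ) ^ J := by
        rw [hz, hn']; ring
      exact mul_right_cancel₀ hM0 e
    exact_mod_cast hk'
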